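/- Let f : [−π,π]³ → M₃(ℝ) be continuous with values in symmetric 3×3 real matrices, and suppose there is c > 0 such that ⟨v, f(p)v⟩ ≥ c|p|²|v|² for all p and v ∈ ℝ³, and that f(p) is positive definite for every p ≠ 0. For N ≥ 1 let Λ_N = ((2π/N)ℤ)³ ∩ [−π,π)³ be the discrete Brillouin zone (a set of N³ points). Then (1/N³) ∑_{p ∈ Λ_N, p ≠ 0} log det f(p) converges, as N → ∞, to (2π)⁻³ ∫_{[−π,π]³} log det f(p) dp. -/

import Mathlib

open scoped BigOperators
open Matrix MeasureTheory Set Filter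

/-- The cube `[−π, π]³`. -/
def brillouinCube : Set (Fin 3 → ℝ) :=
  Set.pi Set.univ fun _ => Set.Icc (-Real.pi) Real.pi

/-- The grid point `(2π/N)·m ∈ ℝ³` attached to `m ∈ ℤ³`. -/
noncomputable def gridPt (N : ℕ) (m : Fin 3 → ℤ) : Fin 3 → ℝ :=
  fun i => 2 * Real.pi * (m i : ℝ) / N

/-- The index set of the discrete Brillouin zone `((2π/N)ℤ)³ ∩ [−π,π)³`: those `m ∈ ℤ³`
with each coordinate satisfying `−π ≤ 2π mᵢ/N < π`, i.e. `−⌊N/2⌋ ≤ mᵢ < ⌈N/2⌉`;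
it has exactly `N³` elements. -/
noncomputable def gridIdx (N : ℕ) : Finset (Fin 3 → ℤ) :=
  Fintype.piFinset fun _ => Finset.Ico (-((N : ℤ) / 2)) (((N : ℤ) + 1) / 2)

noncomputable def bzIdx (N : ℕ) (x : Fin 3 → ℝ) : Fin 3 → ℤ :=
  fun i => ⌊(N : ℝ) * x i / (2 * Real.pi)⌋

noncomputable def bzCell (N : ℕ) (m : Fin 3 → ℤ) : Set (Fin 3 → ℝ) :=
  Set.pi Set.univ fun i => Set.Ico (2 * Real.pi * (m i : ℝ) / N) (2 * Real.pi * ((m i : ℝ) + 1) / N)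

lemma bz_floor_eq_iff {N : ℕ} (hN : 0 < N) (t : ℝ) (k : ℤ) :
    ⌊(N : ℝ) * t / (2 * Real.pi)⌋ = k ↔
      2 * Real.pi * (k : ℝ) / N ≤ t ∧ t < 2 * Real.pi * ((k : ℝ) + 1) / N := by
  have h2 : (0:ℝ) < 2 * Real.pi := by positivity
  have hN' : (0:ℝ) < N := by exact_mod_cast hN
  rw [Int.floor_eq_iff, le_div_iff₀ h2, div_le_iff₀ hN', div_lt_iff₀ h2, lt_div_iff₀ hN']
  push_cast
  constructor <;> rintro ⟨h1, h2⟩ <;> constructor <;> nlinarith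

lemma mem_bzCell_iff {N : ℕ} (hN : 0 < N) (x : Fin 3 → ℝ) (m : Fin 3 → ℤ) :
    x ∈ bzCell N m ↔ bzIdx N x = m := by
  rw [funext_iff, bzCell, Set.mem_pi]
  exact ⟨fun h i => (bz_floor_eq_iff hN (x i) (m i)).2 (h i (Set.mem_univ i)),
    fun h i _ => (bz_floor_eq_iff hN (x i) (m i)).1 (h i)⟩

lemma bzCell_measurable (N : ℕ) (m : Fin 3 → ℤ) : MeasurableSet (bzCell N m) :=
  MeasurableSet.univ_pi fun i => measurableSet_Ico

lemma bzCell_volume {N : ℕ} (hN : 0 < N) (m : Fin 3 → ℤ) :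
    volume (bzCell N m) = ENNReal.ofReal ((2 * Real.pi / N) ^ 3) := by
  have hN' : (0:ℝ) < N := by exact_mod_cast hN
  rw [bzCell, volume_pi_pi]
  have : ∀ i : Fin 3, volume (Set.Ico (2 * Real.pi * (m i : ℝ) / N)
      (2 * Real.pi * ((m i : ℝ) + 1) / N)) = ENNReal.ofReal (2 * Real.pi / N) := by
    intro i
    rw [Real.volume_Ico]
    congr 1
    field_simp
    ring
  simp only [this, Finset.prod_const]
  rw [← ENNReal.ofReal_pow (by positivity)]
  simp [Finset.card_univ]

noncomputable def FN (g : (Fin 3 → ℝ) → ℝ) (N : ℕ) (x : Fin 3 → ℝ) : ℝ :=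
  if bzIdx N x ∈ (gridIdx N).erase 0 then g (gridPt N (bzIdx N x)) else 0

lemma mem_gridIdx {N : ℕ} {m : Fin 3 → ℤ} :
    m ∈ gridIdx N ↔ ∀ i, -((N:ℤ)/2) ≤ m i ∧ m i < ((N:ℤ)+1)/2 := by
  simp [gridIdx, Fintype.mem_piFinset]

lemma FN_eq_sum (g : (Fin 3 → ℝ) → ℝ) {N : ℕ} (hN : 0 < N) :
    FN g N = fun x => ∑ m ∈ (gridIdx N).erase 0,
      (bzCell N m).indicator (fun _ => g (gridPt N m)) x := by
  funext x
  rw [FN]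
  by_cases h : bzIdx N x ∈ (gridIdx N).erase 0
  · rw [if_pos h]
    rw [Finset.sum_eq_single_of_mem (bzIdx N x) h]
    · rw [Set.indicator_of_mem ((mem_bzCell_iff hN x _).2 rfl)]
    · intro m _ hm
      exact Set.indicator_of_notMem (fun hx => hm ((mem_bzCell_iff hN x m).1 hx).symm) _
  · rw [if_neg h]
    refine (Finset.sum_eq_zero fun m hm => ?_).symm
    refine Set.indicator_of_notMem (fun hx => ?_) _
    exact h (((mem_bzCell_iff hN x m).1 hx) ▸ hm)

lemma FN_integral (g : (Fin 3 → ℝ) → ℝ) {N : ℕ} (hN : 0 < N) :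
    ∫ x, FN g N x = (2 * Real.pi / N) ^ 3 * ∑ m ∈ (gridIdx N).erase 0, g (gridPt N m) := by
  have hN' : (0:ℝ) < N := by exact_mod_cast hN
  have hvol : (0:ℝ) ≤ (2 * Real.pi / N) ^ 3 := by positivity
  rw [FN_eq_sum g hN]
  rw [integral_finset_sum _ (fun m _ => (integrable_indicator_iff (bzCell_measurable N m)).2
      (integrableOn_const (by rw [bzCell_volume hN m]; exact ENNReal.ofReal_ne_top)))]
  rw [Finset.mul_sum]
  refine Finset.sum_congr rfl fun m _ => ?_
  rw [integral_indicator_const _ (bzCell_measurable N m), measureReal_def, bzCell_volume hN m,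
    ENNReal.toReal_ofReal hvol, smul_eq_mul]

lemma FN_measurable (g : (Fin 3 → ℝ) → ℝ) (N : ℕ) : AEStronglyMeasurable (FN g N) volume := by
  rcases Nat.eq_zero_or_pos N with h | h
  · subst h
    have : FN g 0 = fun _ => 0 := by
      funext x
      rw [FN, if_neg]
      intro hmem
      have := (mem_gridIdx.1 (Finset.mem_of_mem_erase hmem)) 0
      omega
    rw [this]; exact aestronglyMeasurable_const
  · rw [FN_eq_sum g h]
    exact (Finset.aestronglyMeasurable_fun_sum _ fun m _ =>
      (((stronglyMeasurable_const (b := g (gridPt N m))).indicator (bzCell_measurable N m)).aestronglyMeasurable))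

lemma det_lower {A : Matrix (Fin 3) (Fin 3) ℝ} (hA : A.IsSymm) {lam : ℝ} (hlam : 0 ≤ lam)
    (h : ∀ v : Fin 3 → ℝ, lam * (∑ i, v i ^ 2) ≤ v ⬝ᵥ A.mulVec v) :
    lam ^ 3 ≤ A.det := by
  have hherm : A.IsHermitian := by
    rw [Matrix.IsHermitian, Matrix.conjTranspose_eq_transpose_of_trivial]; exact hA
  have hdet : A.det = ∏ i, hherm.eigenvalues i := by
    simpa using hherm.det_eq_prod_eigenvalues
  have hev : ∀ i, lam ≤ hherm.eigenvalues i := by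
    intro i
    set u : Fin 3 → ℝ := ⇑(hherm.eigenvectorBasis i) with hu
    have hnorm : ∑ j, u j ^ 2 = 1 := by
      have h1 : ‖hherm.eigenvectorBasis i‖ = 1 := hherm.eigenvectorBasis.orthonormal.1 i
      have h2 : ‖hherm.eigenvectorBasis i‖ = Real.sqrt (∑ j, ‖u j‖ ^ 2) :=
        EuclideanSpace.norm_eq _
      have h3 : Real.sqrt (∑ j, u j ^ 2) = 1 := by
        rw [h1] at h2
        simpa [Real.norm_eq_abs, sq_abs] using h2.symm
      have h4 : (0:ℝ) ≤ ∑ j, u j ^ 2 := Finset.sum_nonneg fun j _ => sq_nonneg _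
      nlinarith [Real.sq_sqrt h4]
    have hmv : A.mulVec u = hherm.eigenvalues i • u := hherm.mulVec_eigenvectorBasis i
    have := h u
    rw [hmv, dotProduct_smul] at this
    have hdd : u ⬝ᵥ u = ∑ j, u j ^ 2 := by
      simp [dotProduct, sq]
    rw [smul_eq_mul, hdd, hnorm] at this
    linarith
  calc lam ^ 3 = ∏ _i : Fin 3, lam := by simp
    _ ≤ ∏ i, hherm.eigenvalues i :=
        Finset.prod_le_prod (fun _ _ => hlam) (fun i _ => hev i)
    _ = A.det := hdet.symm

lemma integ_abs_rpow : IntegrableOn (fun t : ℝ => |t| ^ (-(1:ℝ)/2)) (Set.Ioc (-10:ℝ) 10) := by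
  have h1 : IntervalIntegrable (fun t : ℝ => |t| ^ (-(1:ℝ)/2)) volume 0 10 := by
    refine (intervalIntegral.intervalIntegrable_rpow' (a := (0:ℝ)) (b := 10)
      (r := -(1:ℝ)/2) (by norm_num)).congr ?_
    intro t ht; beta_reduce
    rw [Set.uIoc_of_le (by norm_num : (0:ℝ) ≤ 10)] at ht
    rw [abs_of_pos ht.1]
  have h2 : IntervalIntegrable (fun t : ℝ => |t| ^ (-(1:ℝ)/2)) volume (-10) 0 := by
    have := (IntervalIntegrable.iff_comp_neg).1 h1
    simp only [abs_neg, neg_zero] at this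
    exact this.symm
  have h3 := h2.trans h1
  rwa [intervalIntegrable_iff_integrableOn_Ioc_of_le (by norm_num)] at h3

lemma dom_integrable (A B : ℝ) :
    Integrable (fun x : Fin 3 → ℝ =>
      (Set.pi Set.univ fun _ => Set.Ioc (-10:ℝ) 10).indicator
        (fun x => A + B * |x 0| ^ (-(1:ℝ)/2)) x) := by
  have hbox : MeasurableSet (Set.pi Set.univ fun _ : Fin 3 => Set.Ioc (-10:ℝ) 10) :=
    MeasurableSet.univ_pi fun _ => measurableSet_Ioc
  have key : (fun x : Fin 3 → ℝ =>
      (Set.pi Set.univ fun _ => Set.Ioc (-10:ℝ) 10).indicator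
        (fun x => A + B * |x 0| ^ (-(1:ℝ)/2)) x)
      = fun x => ∏ i : Fin 3,
        (fun i (t : ℝ) => (Set.Ioc (-10:ℝ) 10).indicator
          (fun t => if i = 0 then A + B * |t| ^ (-(1:ℝ)/2) else 1) t) i (x i) := by
    funext x
    by_cases hx : x ∈ Set.pi Set.univ fun _ : Fin 3 => Set.Ioc (-10:ℝ) 10
    · rw [Set.indicator_of_mem hx]
      have hmem : ∀ i : Fin 3, x i ∈ Set.Ioc (-10:ℝ) 10 := fun i => hx i (Set.mem_univ i)
      simp only [Set.indicator_of_mem (hmem _)]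
      rw [Fin.prod_univ_three]
      norm_num [Fin.ext_iff]
    · rw [Set.indicator_of_notMem hx]
      rw [Set.mem_pi] at hx
      push_neg at hx
      obtain ⟨j, -, hj⟩ := hx
      exact (Finset.prod_eq_zero (Finset.mem_univ j) (by simp [Set.indicator_of_notMem hj])).symm
  rw [key]
  apply MeasureTheory.Integrable.fintype_prod (𝕜 := ℝ)
  intro i
  rcases eq_or_ne i 0 with h | h
  · subst h
    simp only [if_pos rfl]
    rw [integrable_indicator_iff measurableSet_Ioc]
    apply Integrable.add
    · exact integrableOn_const (by simp)
    · exact (integ_abs_rpow.const_mul B)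
  · simp only [if_neg h]
    rw [integrable_indicator_iff measurableSet_Ioc]
    exact integrableOn_const (by simp)

lemma gridPt_mem_cube {N : ℕ} (hN : 0 < N) {m : Fin 3 → ℤ} (hm : m ∈ gridIdx N) :
    gridPt N m ∈ brillouinCube := by
  intro i _
  have hN' : (0:ℝ) < N := by exact_mod_cast hN
  have pi_pos := Real.pi_pos
  obtain ⟨h1, h2⟩ := mem_gridIdx.1 hm i
  have hb : -(N:ℤ) ≤ 2 * m i ∧ 2 * m i ≤ (N:ℤ) := by omega
  have hb1 : -(N:ℝ) ≤ 2 * (m i : ℝ) := by exact_mod_cast hb.1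
  have hb2 : 2 * (m i : ℝ) ≤ (N:ℝ) := by exact_mod_cast hb.2
  rw [gridPt]
  constructor
  · rw [le_div_iff₀ hN']; nlinarith
  · rw [div_le_iff₀ hN']; nlinarith

lemma gridPt_big {N : ℕ} (hN : 0 < N) {m : Fin 3 → ℤ} (hm : m ∈ (gridIdx N).erase 0) :
    ∃ j, 2 * Real.pi / N ≤ |gridPt N m j| := by
  have hN' : (0:ℝ) < N := by exact_mod_cast hN
  have pi_pos := Real.pi_pos
  have hm0 : m ≠ 0 := Finset.ne_of_mem_erase hm
  have : ∃ j, m j ≠ 0 := by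
    by_contra h
    push_neg at h
    exact hm0 (funext fun j => h j)
  obtain ⟨j, hj⟩ := this
  refine ⟨j, ?_⟩
  have h1 : (1:ℝ) ≤ |(m j : ℝ)| := by
    rw [← Int.cast_abs]
    exact_mod_cast Int.one_le_abs (by exact_mod_cast hj)
  rw [gridPt, abs_div, abs_of_pos hN', abs_mul, abs_of_pos (by positivity : (0:ℝ) < 2 * Real.pi)]
  rw [div_le_div_iff₀ hN' hN']
  nlinarith [mul_le_mul_of_nonneg_right (mul_le_mul_of_nonneg_left h1
    (by positivity : (0:ℝ) ≤ 2 * Real.pi)) hN'.le]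

lemma neg_log_le_rpow {t : ℝ} (ht : 0 < t) : -Real.log t ≤ 2 * t ^ (-(1:ℝ)/2) := by
  have h1 : Real.log (t ^ (-(1:ℝ)/2)) = (-(1:ℝ)/2) * Real.log t := Real.log_rpow ht _
  have h2 : Real.log (t ^ (-(1:ℝ)/2)) ≤ t ^ (-(1:ℝ)/2) := by
    have := Real.log_le_sub_one_of_pos (Real.rpow_pos_of_pos ht (-(1:ℝ)/2))
    linarith
  linarith

lemma bzIdx_bounds {N : ℕ} (hN : 0 < N) (x : Fin 3 → ℝ) (i : Fin 3) :
    2 * Real.pi * ((bzIdx N x i : ℝ)) / N ≤ x i ∧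
      x i < 2 * Real.pi * ((bzIdx N x i : ℝ) + 1) / N := by
  have pi_pos := Real.pi_pos
  have hN' : (0:ℝ) < N := by exact_mod_cast hN
  have h2 : (0:ℝ) < 2 * Real.pi := by positivity
  simp only [bzIdx]
  have h1 := Int.floor_le ((N : ℝ) * x i / (2 * Real.pi))
  have h2' := Int.lt_floor_add_one ((N : ℝ) * x i / (2 * Real.pi))
  rw [le_div_iff₀ h2] at h1
  rw [div_lt_iff₀ h2] at h2'
  constructor
  · rw [div_le_iff₀ hN']; nlinarith
  · rw [lt_div_iff₀ hN']; nlinarith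


lemma int_half_le {N : ℕ} : 2 * (((N:ℤ)/2 : ℤ):ℝ) ≤ (N:ℝ) := by
  exact_mod_cast (by omega : 2*((N:ℤ)/2) ≤ (N:ℤ))

lemma int_half_ge {N : ℕ} : (N:ℝ) - 1 ≤ 2 * (((N:ℤ)/2 : ℤ):ℝ) := by
  exact_mod_cast (by omega : (N:ℤ) - 1 ≤ 2*((N:ℤ)/2))

lemma int_half1_le {N : ℕ} : 2 * ((((N:ℤ)+1)/2 : ℤ):ℝ) ≤ (N:ℝ) + 1 := by
  exact_mod_cast (by omega : 2*(((N:ℤ)+1)/2) ≤ (N:ℤ)+1)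

lemma int_half1_ge {N : ℕ} : (N:ℝ) ≤ 2 * ((((N:ℤ)+1)/2 : ℤ):ℝ) := by
  exact_mod_cast (by omega : (N:ℤ) ≤ 2*(((N:ℤ)+1)/2))

lemma FN_tendsto {g : (Fin 3 → ℝ) → ℝ}
    (hgc : ∀ x ∈ brillouinCube, x ≠ 0 → ContinuousWithinAt g brillouinCube x)
    {x : Fin 3 → ℝ} (hx0 : x 0 ≠ 0) (hxb : ∀ i, x i ≠ Real.pi ∧ x i ≠ -Real.pi) :
    Filter.Tendsto (fun N => FN g N x) Filter.atTop (nhds (brillouinCube.indicator g x)) := by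
  have pi_pos := Real.pi_pos
  have h2pi : (0:ℝ) < 2 * Real.pi := by positivity
  have htend : Tendsto (fun N : ℕ => 2 * Real.pi / N) atTop (nhds 0) :=
    tendsto_const_div_atTop_nhds_zero_nat _
  by_cases hcube : ∀ i, |x i| < Real.pi
  · -- x in the open cube
    have hxc : x ∈ brillouinCube := fun i _ => abs_le.1 (le_of_lt (hcube i))
    have hxne : x ≠ 0 := fun h => hx0 (by rw [h]; rfl)
    -- eventually the index is admissible
    have hev : ∀ᶠ N : ℕ in atTop, bzIdx N x ∈ (gridIdx N).erase 0 := by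
      have e1 : ∀ᶠ N : ℕ in atTop, ∀ i, 2 * Real.pi / N < x i + Real.pi := by
        rw [eventually_all]
        intro i
        exact htend.eventually_lt_const (by linarith [neg_abs_le (x i), (hcube i)])
      have e2 : ∀ᶠ N : ℕ in atTop, 2 * Real.pi / N < |x 0| :=
        htend.eventually_lt_const (abs_pos.2 hx0)
      filter_upwards [e1, e2, eventually_ge_atTop 1] with N h1 h2 hN1
      have hN : 0 < N := hN1
      have hN' : (0:ℝ) < N := by exact_mod_cast hN
      rw [Finset.mem_erase]
      constructor
      · -- nonzero
        intro h0
        have hk0 : bzIdx N x 0 = 0 := by rw [h0]; rfl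
        obtain ⟨hb1, hb2⟩ := bzIdx_bounds hN x 0
        rw [hk0] at hb1 hb2
        push_cast at hb1 hb2
        simp only [mul_zero, zero_div] at hb1
        rcases lt_or_gt_of_ne hx0 with hlt | hgt
        · linarith
        · have heq : 2 * Real.pi * (0 + 1) / N = 2 * Real.pi / N := by ring
          rw [heq] at hb2
          rw [abs_of_pos hgt] at h2
          linarith
      · rw [mem_gridIdx]
        intro i
        have hxi := hcube i
        constructor
        · -- lower bound
          show -((N:ℤ)/2) ≤ ⌊(N : ℝ) * x i / (2 * Real.pi)⌋
          apply Int.le_floor.2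
          rw [le_div_iff₀ h2pi]
          have h1i := h1 i
          rw [div_lt_iff₀ hN'] at h1i
          have hih := int_half_ge (N := N)
          push_cast
          nlinarith [mul_le_mul_of_nonneg_right hih pi_pos.le]
        · -- upper bound
          show ⌊(N : ℝ) * x i / (2 * Real.pi)⌋ < ((N:ℤ)+1)/2
          apply Int.floor_lt.2
          rw [div_lt_iff₀ h2pi]
          have hih := int_half1_ge (N := N)
          push_cast
          nlinarith [mul_le_mul_of_nonneg_right hih pi_pos.le,
            mul_lt_mul_of_pos_left (lt_of_le_of_lt (le_abs_self (x i)) hxi) hN']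
    -- the grid points converge to x within the cube
    have hq : Tendsto (fun N : ℕ => gridPt N (bzIdx N x)) atTop (nhdsWithin x brillouinCube) := by
      rw [tendsto_nhdsWithin_iff]
      constructor
      · rw [tendsto_pi_nhds]
        intro i
        apply tendsto_of_tendsto_of_tendsto_of_le_of_le'
          (show Tendsto (fun N : ℕ => x i - 2 * Real.pi / N) atTop (nhds (x i)) by
            simpa using tendsto_const_nhds.sub htend)
          (tendsto_const_nhds (x := x i))
        · filter_upwards [eventually_ge_atTop 1] with N hN1
          have hN : 0 < N := hN1
          have hN' : (0:ℝ) < N := by exact_mod_cast hN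
          obtain ⟨hb1, hb2⟩ := bzIdx_bounds hN x i
          have : gridPt N (bzIdx N x) i = 2 * Real.pi * ((bzIdx N x i : ℝ)) / N := rfl
          rw [this]
          have hexp : 2 * Real.pi * ((bzIdx N x i : ℝ) + 1) / N
              = 2 * Real.pi * (bzIdx N x i : ℝ) / N + 2 * Real.pi / N := by ring
          rw [hexp] at hb2
          linarith
        · filter_upwards [eventually_ge_atTop 1] with N hN1
          have hN : 0 < N := hN1
          exact (bzIdx_bounds hN x i).1
      · filter_upwards [hev, eventually_ge_atTop 1] with N h1 hN1
        exact gridPt_mem_cube hN1 (Finset.mem_of_mem_erase h1)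
    have hgt : Tendsto (fun N : ℕ => g (gridPt N (bzIdx N x))) atTop (nhds (g x)) :=
      ((hgc x hxc hxne).tendsto).comp hq
    rw [Set.indicator_of_mem hxc]
    apply hgt.congr'
    filter_upwards [hev] with N hN
    rw [FN, if_pos hN]
  · -- x outside the closed cube
    push_neg at hcube
    obtain ⟨i, hi⟩ := hcube
    have hi' : Real.pi < |x i| := by
      rcases lt_or_eq_of_le hi with h | h
      · exact h
      · exfalso
        rcases abs_eq (le_of_lt pi_pos) |>.1 h.symm with h' | h'
        · exact (hxb i).1 h'
        · exact (hxb i).2 h'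
    have hxnc : x ∉ brillouinCube := fun hmem =>
      absurd (abs_le.2 ⟨(hmem i (Set.mem_univ i)).1, (hmem i (Set.mem_univ i)).2⟩)
        (not_le.2 hi')
    rw [Set.indicator_of_notMem hxnc]
    have hev0 : ∀ᶠ N : ℕ in atTop, FN g N x = 0 := by
      rcases lt_abs.1 hi' with hpos | hneg
      · -- x i > π
        have e3 : ∀ᶠ N : ℕ in atTop, 2 * Real.pi / N < x i - Real.pi :=
          htend.eventually_lt_const (by linarith)
        filter_upwards [e3, eventually_ge_atTop 1] with N h3 hN1
        have hN : 0 < N := hN1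
        have hN' : (0:ℝ) < N := by exact_mod_cast hN
        rw [FN, if_neg]
        intro hmem
        have hlt := (mem_gridIdx.1 (Finset.mem_of_mem_erase hmem) i).2
        have hge : ((N:ℤ)+1)/2 ≤ bzIdx N x i := by
          apply Int.le_floor.2
          rw [le_div_iff₀ h2pi, div_lt_iff₀ hN'] at *
          have hih := int_half1_le (N := N)
          nlinarith [mul_le_mul_of_nonneg_right hih pi_pos.le]
        omega
      · -- x i < -π
        filter_upwards [eventually_ge_atTop 1] with N hN1
        have hN : 0 < N := hN1
        have hN' : (0:ℝ) < N := by exact_mod_cast hN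
        rw [FN, if_neg]
        intro hmem
        have hgee := (mem_gridIdx.1 (Finset.mem_of_mem_erase hmem) i).1
        have hle := Int.le_floor.1 hgee
        rw [le_div_iff₀ h2pi] at hle
        push_cast at hle
        have hih := int_half_le (N := N)
        have hneg' : x i < -Real.pi := by linarith
        nlinarith [mul_le_mul_of_nonneg_right hih pi_pos.le,
          mul_lt_mul_of_pos_left hneg' hN']
    exact tendsto_const_nhds.congr' (hev0.mono fun N h => h.symm)

lemma FN_bound {f : (Fin 3 → ℝ) → Matrix (Fin 3) (Fin 3) ℝ}
    (hsymm : ∀ p, (f p).IsSymm) {c : ℝ} (hc : 0 < c)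
    (hlow : ∀ p ∈ brillouinCube, ∀ v : Fin 3 → ℝ,
      c * (∑ i, p i ^ 2) * (∑ i, v i ^ 2) ≤ v ⬝ᵥ (f p).mulVec v)
    {D : ℝ} (hD1 : 1 ≤ D) (hDb : ∀ p ∈ brillouinCube, (f p).det ≤ D)
    {N : ℕ} (hN : 0 < N) {x : Fin 3 → ℝ} (hx0 : x 0 ≠ 0) :
    ‖FN (fun p => Real.log (f p).det) N x‖ ≤
      (Set.pi Set.univ fun _ : Fin 3 => Set.Ioc (-10:ℝ) 10).indicator
        (fun x => (Real.log D + 3 * |Real.log c| + 3 * Real.log 4)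
          + 12 * |x 0| ^ (-(1:ℝ)/2)) x := by
  have pi_pos := Real.pi_pos
  have hN' : (0:ℝ) < N := by exact_mod_cast hN
  have hind : ∀ y : Fin 3 → ℝ, 0 ≤ (Set.pi Set.univ fun _ : Fin 3 => Set.Ioc (-10:ℝ) 10).indicator
      (fun x => (Real.log D + 3 * |Real.log c| + 3 * Real.log 4)
        + 12 * |x 0| ^ (-(1:ℝ)/2)) y := by
    intro y
    apply Set.indicator_nonneg
    intro z _
    have h4 : (0:ℝ) ≤ Real.log 4 := Real.log_nonneg (by norm_num)
    have hD0 : (0:ℝ) ≤ Real.log D := Real.log_nonneg hD1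
    have : (0:ℝ) ≤ |z 0| ^ (-(1:ℝ)/2) := Real.rpow_nonneg (abs_nonneg _) _
    positivity
  rw [FN]
  by_cases h : bzIdx N x ∈ (gridIdx N).erase 0
  swap
  · rw [if_neg h]; simpa using hind x
  rw [if_pos h]
  set m := bzIdx N x with hmdef
  set p := gridPt N m with hpdef
  have hp : p ∈ brillouinCube := gridPt_mem_cube hN (Finset.mem_of_mem_erase h)
  have hcell : ∀ i, 2 * Real.pi * (m i : ℝ) / N ≤ x i ∧
      x i < 2 * Real.pi * ((m i : ℝ) + 1) / N := by
    intro i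
    have := (mem_bzCell_iff hN x m).2 rfl
    exact ⟨(this i (Set.mem_univ i)).1, (this i (Set.mem_univ i)).2⟩
  have hxd : ∀ i, |x i| ≤ |p i| + 2 * Real.pi / N := by
    intro i
    obtain ⟨h1, h2⟩ := hcell i
    have hpi : p i = 2 * Real.pi * (m i : ℝ) / N := rfl
    rw [abs_le]
    constructor
    · have := neg_abs_le (p i); rw [hpi] at this ⊢
      have hpos : (0:ℝ) ≤ 2 * Real.pi / N := by positivity
      linarith
    · have := le_abs_self (p i); rw [hpi] at this ⊢
      have : 2 * Real.pi * ((m i : ℝ) + 1) / N = 2 * Real.pi * (m i : ℝ) / N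
          + 2 * Real.pi / N := by ring
      linarith [le_abs_self (2 * Real.pi * (m i : ℝ) / N : ℝ)]
  have hpbd : ∀ i, |p i| ≤ Real.pi := by
    intro i
    have := hp i (Set.mem_univ i)
    rw [abs_le]; exact ⟨this.1, this.2⟩
  have hbox : x ∈ Set.pi Set.univ fun _ : Fin 3 => Set.Ioc (-10:ℝ) 10 := by
    intro i _
    have h1 := hxd i
    have h2 := hpbd i
    have h3 : 2 * Real.pi / N ≤ 2 * Real.pi := by
      rw [div_le_iff₀ hN']
      have : (1:ℝ) ≤ N := by exact_mod_cast hN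
      nlinarith
    have hpi315 := Real.pi_lt_d2
    constructor
    · nlinarith [neg_abs_le (x i)]
    · nlinarith [le_abs_self (x i)]
  rw [Set.indicator_of_mem hbox]
  set s := ∑ i, p i ^ 2 with hsdef
  obtain ⟨j, hj⟩ := gridPt_big hN h
  have hsnn : (0:ℝ) ≤ s := Finset.sum_nonneg fun i _ => sq_nonneg _
  have hsqle : ∀ i, |p i| ≤ Real.sqrt s := by
    intro i
    rw [← Real.sqrt_sq_eq_abs]
    exact Real.sqrt_le_sqrt (Finset.single_le_sum (fun i _ => sq_nonneg (p i)) (Finset.mem_univ i))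
  have hx4 : x 0 ^ 2 ≤ 4 * s := by
    have h1 := hxd 0
    have h2 := hsqle 0
    have h3 := hsqle j
    have h4 : |x 0| ≤ 2 * Real.sqrt s := by linarith [hj]
    nlinarith [Real.sq_sqrt hsnn, abs_nonneg (x 0), sq_abs (x 0)]
  have hx2pos : (0:ℝ) < x 0 ^ 2 := by positivity
  have hspos : (0:ℝ) < s := by nlinarith
  have hdetlow : (c * s) ^ 3 ≤ (f p).det := by
    apply det_lower (hsymm p) (by positivity)
    intro v
    have := hlow p hp v
    linarith [this]
  have hdetpos : (0:ℝ) < (f p).det := lt_of_lt_of_le (by positivity) hdetlow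
  have hup : Real.log (f p).det ≤ Real.log D := Real.log_le_log hdetpos (hDb p hp)
  have hlow2 : 3 * (Real.log c + Real.log s) ≤ Real.log (f p).det := by
    have h1 : Real.log ((c * s) ^ 3) ≤ Real.log (f p).det :=
      Real.log_le_log (by positivity) hdetlow
    rw [Real.log_pow, Real.log_mul (ne_of_gt hc) (ne_of_gt hspos)] at h1
    push_cast at h1
    linarith
  have hlogs : Real.log (x 0 ^ 2 / 4) ≤ Real.log s :=
    Real.log_le_log (by positivity) (by linarith)
  have hexp : Real.log (x 0 ^ 2 / 4) = 2 * Real.log |x 0| - Real.log 4 := by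
    rw [Real.log_div (ne_of_gt hx2pos) (by norm_num), Real.log_pow, Real.log_abs]
    push_cast
    ring
  have hr : -Real.log |x 0| ≤ 2 * |x 0| ^ (-(1:ℝ)/2) :=
    neg_log_le_rpow (abs_pos.2 hx0)
  have hrnn : (0:ℝ) ≤ |x 0| ^ (-(1:ℝ)/2) := Real.rpow_nonneg (abs_nonneg _) _
  have h4 : (0:ℝ) ≤ Real.log 4 := Real.log_nonneg (by norm_num)
  have hD0 : (0:ℝ) ≤ Real.log D := Real.log_nonneg hD1
  rw [Real.norm_eq_abs, abs_le]
  constructor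
  · have hcabs := neg_abs_le (Real.log c)
    linarith
  · have hcabs : (0:ℝ) ≤ |Real.log c| := abs_nonneg _
    linarith

/-- For `f : [−π,π]³ → M₃(ℝ)` continuous, symmetric-valued, with
`⟨v, f(p)v⟩ ≥ c|p|²|v|²` and `f(p)` positive definite for `p ≠ 0`, the Riemann sums of
`log det f` over the discrete Brillouin zones (omitting `p = 0`) converge to
`(2π)⁻³ ∫_{[−π,π]³} log det f(p) dp`. -/
theorem tendsto_discrete_log_det_sum
    (f : (Fin 3 → ℝ) → Matrix (Fin 3) (Fin 3) ℝ)
    (hcont : ContinuousOn f brillouinCube)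
    (hsymm : ∀ p, (f p).IsSymm)
    (c : ℝ) (hc : 0 < c)
    (hlow : ∀ p ∈ brillouinCube, ∀ v : Fin 3 → ℝ,
      c * (∑ i, p i ^ 2) * (∑ i, v i ^ 2) ≤ v ⬝ᵥ (f p).mulVec v)
    (hpd : ∀ p ∈ brillouinCube, p ≠ 0 → (f p).PosDef) :
    Filter.Tendsto
      (fun N : ℕ => (1 / (N : ℝ) ^ 3) *
        ∑ m ∈ (gridIdx N).erase 0, Real.log (f (gridPt N m)).det)
      Filter.atTop
      (nhds ((2 * Real.pi)⁻¹ ^ 3 * ∫ p in brillouinCube, Real.log (f p).det)) := by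
  have pi_pos := Real.pi_pos
  set g : (Fin 3 → ℝ) → ℝ := fun p => Real.log (f p).det with hgdef
  have hcube_meas : MeasurableSet brillouinCube :=
    MeasurableSet.univ_pi fun _ => measurableSet_Icc
  have hdetc : ContinuousOn (fun p => (f p).det) brillouinCube :=
    (Continuous.matrix_det continuous_id).comp_continuousOn hcont
  have hgc : ∀ x ∈ brillouinCube, x ≠ 0 → ContinuousWithinAt g brillouinCube x := by
    intro x hx hxne
    have h1 : ContinuousWithinAt (fun p => (f p).det) brillouinCube x := hdetc x hx
    have h2 : ContinuousAt Real.log ((f x).det) :=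
      Real.continuousAt_log (ne_of_gt (hpd x hx hxne).det_pos)
    simpa [Function.comp_def] using ContinuousAt.comp_continuousWithinAt (f := fun p => (f p).det) h2 h1
  have hcompact : IsCompact brillouinCube := isCompact_univ_pi fun _ => isCompact_Icc
  obtain ⟨C, hC⟩ := hcompact.exists_bound_of_continuousOn hdetc
  set D : ℝ := max C 1 with hDdef
  have hD1 : (1:ℝ) ≤ D := le_max_right _ _
  have hDb : ∀ p ∈ brillouinCube, (f p).det ≤ D := fun p hp =>
    le_trans (le_trans (le_abs_self _) (by simpa [Real.norm_eq_abs] using hC p hp))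
      (le_max_left _ _)
  set A : ℝ := Real.log D + 3 * |Real.log c| + 3 * Real.log 4 with hAdef
  set bound : (Fin 3 → ℝ) → ℝ := fun x =>
    (Set.pi Set.univ fun _ : Fin 3 => Set.Ioc (-10:ℝ) 10).indicator
      (fun x => A + 12 * |x 0| ^ (-(1:ℝ)/2)) x with hbounddef
  have hboundnn : ∀ y, 0 ≤ bound y := by
    intro y
    apply Set.indicator_nonneg
    intro z _
    have h4 : (0:ℝ) ≤ Real.log 4 := Real.log_nonneg (by norm_num)
    have hD0 : (0:ℝ) ≤ Real.log D := Real.log_nonneg hD1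
    have : (0:ℝ) ≤ |z 0| ^ (-(1:ℝ)/2) := Real.rpow_nonneg (abs_nonneg _) _
    have hca : (0:ℝ) ≤ |Real.log c| := abs_nonneg _
    positivity
  -- almost-everywhere good points
  have hae : ∀ᵐ x : (Fin 3 → ℝ), x 0 ≠ 0 ∧ ∀ i, x i ≠ Real.pi ∧ x i ≠ -Real.pi := by
    have hco : ∀ (i : Fin 3) (a : ℝ), ∀ᵐ y : (Fin 3 → ℝ), y i ≠ a := by
      intro i a
      have := MeasureTheory.Measure.ae_eval_ne (μ := fun _ : Fin 3 => (volume : Measure ℝ)) i a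
      rwa [← volume_pi] at this
    filter_upwards [hco 0 0, ae_all_iff.2 fun i : Fin 3 => (hco i Real.pi).and
      (hco i (-Real.pi))] with x h1 h2
    exact ⟨h1, h2⟩
  -- dominated convergence
  have hdct : Filter.Tendsto (fun N : ℕ => ∫ x, FN g N x) Filter.atTop
      (nhds (∫ x, brillouinCube.indicator g x)) := by
    apply MeasureTheory.tendsto_integral_of_dominated_convergence bound
      (fun N => FN_measurable g N) (dom_integrable A 12)
    · intro N
      rcases Nat.eq_zero_or_pos N with h | h
      · subst h
        have hFN0 : FN g 0 = fun _ => 0 := by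
          funext x
          rw [FN, if_neg]
          intro hmem
          have := (mem_gridIdx.1 (Finset.mem_of_mem_erase hmem)) 0
          omega
        rw [hFN0]
        filter_upwards with x
        simpa using hboundnn x
      · filter_upwards [hae] with x hx
        exact FN_bound hsymm hc hlow hD1 hDb h hx.1
    · filter_upwards [hae] with x hx
      exact FN_tendsto hgc hx.1 hx.2
  rw [MeasureTheory.integral_indicator hcube_meas] at hdct
  have hfinal := hdct.const_mul ((2 * Real.pi)⁻¹ ^ 3)
  apply hfinal.congr'
  filter_upwards [eventually_ge_atTop 1] with N hN1
  have hN : 0 < N := hN1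
  have hN' : (0:ℝ) < N := by exact_mod_cast hN
  rw [FN_integral g hN]
  have hkey : (2 * Real.pi)⁻¹ ^ 3 * (2 * Real.pi / N) ^ 3 = 1 / (N:ℝ) ^ 3 := by
    rw [div_pow, ← mul_div_assoc, ← mul_pow]
    rw [inv_mul_cancel₀ (by positivity : (2 * Real.pi) ≠ 0)]
    simp
  rw [← mul_assoc, hkey]
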